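/- arXiv:2311.10289 — 2 statements merged into one kernel-verified Lean document; each statement's English description precedes it below -/
import Mathlib

section
/- (Normalization of the limiting bubble, conclusion of Lemma 4.2(ii)) Let 0 ≤ β < N and define Φ : ℝ^N → ℝ by Φ(x) = -((N-1)/(λ_N (1 - β/N))) log( 1 + λ_N F^o(x)^{(N/(N-1))(1 - β/N)} / ( N^{N/(N-1)} (1 - β/N)^{1/(N-1)} ) ). Then ∫_{ℝ^N} F^o(x)^{-β} exp( λ_N (1 - β/N) (N/(N-1)) Φ(x) ) dx = 1. -/
open MeasureTheory Real Set
open scoped RealInnerProductSpace ENNReal Pointwise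
open Filter

set_option maxHeartbeats 1000000

noncomputable section

/-- The space ℝ^N as a Euclidean space. -/
abbrev Euc (N : ℕ) := EuclideanSpace ℝ (Fin N)

private lemma hasDerivAt_G {n p a β : ℝ} (hp : 0 < p) (ha : 0 < a)
    (hβ : n + p - n * p = β) {s : ℝ} (hs : 0 < s) :
    HasDerivAt (fun s : ℝ => s ^ (n + p) * (s ^ p + a) ^ (-n))
      (s ^ (n + p - 1) * (s ^ p + a) ^ (-(n + 1)) * (β * s ^ p + (n + p) * a)) s := by
  have hsp : (0:ℝ) < s ^ p := Real.rpow_pos_of_pos hs p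
  have hw : (0:ℝ) < s ^ p + a := by linarith
  have d1 : HasDerivAt (fun s : ℝ => s ^ (n + p)) ((n + p) * s ^ (n + p - 1)) s :=
    Real.hasDerivAt_rpow_const (Or.inl hs.ne')
  have d2 : HasDerivAt (fun s : ℝ => s ^ p + a) (p * s ^ (p - 1)) s := by
    simpa using (Real.hasDerivAt_rpow_const (p := p) (Or.inl hs.ne')).add_const a
  have d3 : HasDerivAt (fun s : ℝ => (s ^ p + a) ^ (-n))
      ((p * s ^ (p - 1)) * (-n) * (s ^ p + a) ^ (-n - 1)) s :=
    d2.rpow_const (Or.inl hw.ne')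
  have := d1.mul d3
  refine this.congr_deriv ?_; symm
  have e1 : (s ^ p + a) ^ (-n) = (s ^ p + a) * (s ^ p + a) ^ (-(n + 1)) := by
    nth_rewrite 1 [show -n = 1 + (-(n+1)) by ring]
    rw [Real.rpow_add hw, Real.rpow_one]
  have e1' : (s ^ p + a) ^ (-n - 1) = (s ^ p + a) ^ (-(n + 1)) := by ring_nf
  have e2 : s ^ (n + p) * s ^ (p - 1) = s ^ (n + p - 1) * s ^ p := by
    rw [← Real.rpow_add hs, ← Real.rpow_add hs]; ring_nf
  rw [e1, e1']
  calc s ^ (n + p - 1) * (s ^ p + a) ^ (-(n + 1)) * (β * s ^ p + (n + p) * a)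
      = (n + p) * s ^ (n + p - 1) * ((s ^ p + a) * (s ^ p + a) ^ (-(n + 1)))
        + (s ^ (n + p - 1) * s ^ p) * ((-(n*p)) * (s ^ p + a) ^ (-(n + 1))) := by
        rw [← hβ]; ring
    _ = _ := by rw [← e2]; ring

private lemma hasDerivAt_D {n p a κ β : ℝ} (hp : 0 < p) (ha : 0 < a) (hκ : 0 < κ)
    (hβ : n + p - n * p = β) (hnb : 0 < n - β) {t : ℝ} (ht : 0 < t) :
    HasDerivAt (fun t : ℝ => κ * t ^ p * (t ^ p + a) ^ (-n)
        - n * κ / (n - β) * (t ^ p + a) ^ (1 - n))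
      (κ * t ^ (p - 1) * (t ^ p + a) ^ (-(n + 1)) * (β * t ^ p + (n + p) * a)) t := by
  have hsp : (0:ℝ) < t ^ p := Real.rpow_pos_of_pos ht p
  have hw : (0:ℝ) < t ^ p + a := by linarith
  have d2 : HasDerivAt (fun t : ℝ => t ^ p + a) (p * t ^ (p - 1)) t := by
    simpa using (Real.hasDerivAt_rpow_const (p := p) (Or.inl ht.ne')).add_const a
  have dt1 : HasDerivAt (fun t : ℝ => κ * t ^ p) (κ * (p * t ^ (p - 1))) t :=
    (Real.hasDerivAt_rpow_const (p := p) (Or.inl ht.ne')).const_mul κ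
  have d3 : HasDerivAt (fun t : ℝ => (t ^ p + a) ^ (-n))
      ((p * t ^ (p - 1)) * (-n) * (t ^ p + a) ^ (-n - 1)) t :=
    d2.rpow_const (Or.inl hw.ne')
  have d4 : HasDerivAt (fun t : ℝ => n * κ / (n - β) * (t ^ p + a) ^ (1 - n))
      (n * κ / (n - β) * ((p * t ^ (p - 1)) * (1 - n) * (t ^ p + a) ^ (1 - n - 1))) t :=
    (d2.rpow_const (Or.inl hw.ne')).const_mul _
  have := (dt1.mul d3).sub d4
  refine this.congr_deriv ?_; symm
  have e1 : (t ^ p + a) ^ (-n) = (t ^ p + a) * (t ^ p + a) ^ (-(n + 1)) := by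
    nth_rewrite 1 [show -n = 1 + (-(n+1)) by ring]
    rw [Real.rpow_add hw, Real.rpow_one]
  have e1' : (t ^ p + a) ^ (-n - 1) = (t ^ p + a) ^ (-(n + 1)) := by ring_nf
  have e1'' : (t ^ p + a) ^ (1 - n - 1) = (t ^ p + a) * (t ^ p + a) ^ (-(n + 1)) := by
    rw [show (1:ℝ) - n - 1 = -n by ring]; exact e1
  have e2 : t ^ p * t ^ (p - 1) = t ^ (p - 1) * t ^ p := by ring
  have hc : n * κ / (n - β) * (1 - n) * p = -(n * κ) := by
    have hnb' : n - β = n * p - p := by linarith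
    have hp' : n * p - p ≠ 0 := by rw [← hnb']; exact hnb.ne'
    rw [hnb', div_mul_eq_mul_div, div_mul_eq_mul_div, div_eq_iff hp']; ring
  rw [e1, e1', e1'']
  calc κ * t ^ (p - 1) * (t ^ p + a) ^ (-(n + 1)) * (β * t ^ p + (n + p) * a)
      = κ * (p * t ^ (p - 1)) * ((t ^ p + a) * (t ^ p + a) ^ (-(n + 1)))
        + κ * t ^ p * (p * t ^ (p - 1) * -n * (t ^ p + a) ^ (-(n + 1)))
        - (-(n * κ)) * (t ^ (p - 1) * ((t ^ p + a) * (t ^ p + a) ^ (-(n + 1)))) := by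
        rw [← hβ]; ring
    _ = _ := by rw [← hc]; ring

private lemma contD {n p a κ β : ℝ} (hn : 2 ≤ n) (hp : 0 < p) (ha : 0 < a) :
    ContinuousWithinAt (fun t : ℝ => κ * t ^ p * (t ^ p + a) ^ (-n)
        - n * κ / (n - β) * (t ^ p + a) ^ (1 - n)) (Ici 0) 0 := by
  have c1 : Continuous fun t : ℝ => t ^ p := by
    rw [continuous_iff_continuousAt]
    exact fun x => Real.continuousAt_rpow_const x p (Or.inr hp.le)
  have c2 : ContinuousOn (fun t : ℝ => t ^ p + a) (Ici 0) :=
    (c1.continuousOn.add continuousOn_const)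
  have hwpos : ∀ t ∈ Ici (0:ℝ), t ^ p + a ≠ 0 := by
    intro t ht
    have : (0:ℝ) ≤ t ^ p := Real.rpow_nonneg ht p
    positivity
  have : ContinuousOn (fun t : ℝ => κ * t ^ p * (t ^ p + a) ^ (-n)
      - n * κ / (n - β) * (t ^ p + a) ^ (1 - n)) (Ici 0) := by
    apply ContinuousOn.sub
    · exact (continuousOn_const.mul c1.continuousOn).mul
        (c2.rpow_const fun t ht => Or.inl (hwpos t ht))
    · exact continuousOn_const.mul (c2.rpow_const fun t ht => Or.inl (hwpos t ht))
  exact this.continuousWithinAt (by simp)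

private lemma tendstoD {n p a κ β : ℝ} (hn : 2 ≤ n) (hp : 0 < p) (ha : 0 < a) :
    Tendsto (fun t : ℝ => κ * t ^ p * (t ^ p + a) ^ (-n)
        - n * κ / (n - β) * (t ^ p + a) ^ (1 - n)) atTop (nhds 0) := by
  have hbase : Tendsto (fun t : ℝ => t ^ p + a) atTop atTop :=
    tendsto_atTop_add_const_right _ a (tendsto_rpow_atTop hp)
  have T1 : Tendsto (fun t : ℝ => (t ^ p + a) ^ (-(n - 1))) atTop (nhds 0) :=
    (tendsto_rpow_neg_atTop (by linarith : (0:ℝ) < n - 1)).comp hbase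
  have T2 : Tendsto (fun t : ℝ => (t ^ p + a) ^ (-n)) atTop (nhds 0) :=
    (tendsto_rpow_neg_atTop (by linarith : (0:ℝ) < n)).comp hbase
  have T : Tendsto (fun t : ℝ => (κ - n * κ / (n - β)) * (t ^ p + a) ^ (-(n - 1))
      - κ * a * (t ^ p + a) ^ (-n)) atTop (nhds 0) := by
    have := (T1.const_mul (κ - n * κ / (n - β))).sub (T2.const_mul (κ * a))
    simpa using this
  apply T.congr'
  filter_upwards [eventually_gt_atTop (0:ℝ)] with t ht
  have hsp : (0:ℝ) < t ^ p := Real.rpow_pos_of_pos ht p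
  have hw : (0:ℝ) < t ^ p + a := by linarith
  have e1 : (t ^ p + a) ^ (-(n - 1)) = (t ^ p + a) * (t ^ p + a) ^ (-n) := by
    nth_rewrite 1 [show -(n-1) = 1 + (-n) by ring]
    rw [Real.rpow_add hw, Real.rpow_one]
  have e2 : (t ^ p + a) ^ (1 - n) = (t ^ p + a) * (t ^ p + a) ^ (-n) := by
    nth_rewrite 1 [show (1:ℝ) - n = 1 + (-n) by ring]
    rw [Real.rpow_add hw, Real.rpow_one]
  rw [e1, e2]; ring

private lemma integral_D {n p a κ β : ℝ} (hn : 2 ≤ n) (hp : 0 < p) (ha : 0 < a) (hκ : 0 < κ)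
    (hβ0 : 0 ≤ β) (hβ : n + p - n * p = β) (hnb : 0 < n - β)
    (key : n * κ / (n - β) = a ^ (n - 1)) :
    ∫⁻ t in Ioi (0:ℝ),
      ENNReal.ofReal (κ * t ^ (p - 1) * (t ^ p + a) ^ (-(n + 1)) * (β * t ^ p + (n + p) * a)) = 1 := by
  set D := fun t : ℝ => κ * t ^ p * (t ^ p + a) ^ (-n) - n * κ / (n - β) * (t ^ p + a) ^ (1 - n)
    with hD
  set Dd := fun t : ℝ => κ * t ^ (p - 1) * (t ^ p + a) ^ (-(n + 1)) * (β * t ^ p + (n + p) * a)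
    with hDd
  have hderiv : ∀ t ∈ Ioi (0:ℝ), HasDerivAt D (Dd t) t :=
    fun t ht => hasDerivAt_D hp ha hκ hβ hnb ht
  have hnonneg : ∀ t ∈ Ioi (0:ℝ), 0 ≤ Dd t := by
    intro t ht
    have ht' : (0:ℝ) < t := ht
    have hsp : (0:ℝ) < t ^ p := Real.rpow_pos_of_pos ht' p
    have hw : (0:ℝ) < t ^ p + a := by linarith
    have h1 : (0:ℝ) < t ^ (p - 1) := Real.rpow_pos_of_pos ht' _
    have h2 : (0:ℝ) < (t ^ p + a) ^ (-(n + 1)) := Real.rpow_pos_of_pos hw _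
    have h3 : (0:ℝ) < β * t ^ p + (n + p) * a := by nlinarith
    positivity
  have hcont := contD (κ := κ) (β := β) hn hp ha
  have htend := tendstoD (κ := κ) (β := β) hn hp ha
  have hval : ∫ t in Ioi (0:ℝ), Dd t = 0 - D 0 :=
    integral_Ioi_of_hasDerivAt_of_nonneg hcont hderiv hnonneg htend
  have hint : IntegrableOn Dd (Ioi (0:ℝ)) volume :=
    integrableOn_Ioi_deriv_of_nonneg hcont hderiv hnonneg htend
  have hD0 : D 0 = -1 := by
    have h0p : (0:ℝ) ^ p = 0 := Real.zero_rpow hp.ne'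
    have : D 0 = -(n * κ / (n - β) * a ^ (1 - n)) := by
      simp [hD, h0p]
    rw [this, key, ← Real.rpow_add ha]
    norm_num
  have hval' : ∫ t in Ioi (0:ℝ), Dd t = 1 := by rw [hval, hD0]; norm_num
  rw [← MeasureTheory.ofReal_integral_eq_lintegral_ofReal hint]
  · rw [hval']; norm_num
  · rw [Filter.EventuallyLE, ae_restrict_iff' measurableSet_Ioi]
    exact Filter.Eventually.of_forall fun t ht => hnonneg t ht

private lemma contg_Ici {n p a β : ℝ} (hn : 2 ≤ n) (hp : 0 < p) (ha : 0 < a) (hβ0 : 0 ≤ β)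
    (hnp1 : 0 ≤ n + p - 1) :
    ContinuousOn (fun s : ℝ => s ^ (n + p - 1) * (s ^ p + a) ^ (-(n + 1)) * (β * s ^ p + (n + p) * a))
      (Ici 0) := by
  have c1 : Continuous fun s : ℝ => s ^ p := by
    rw [continuous_iff_continuousAt]
    exact fun x => Real.continuousAt_rpow_const x p (Or.inr hp.le)
  have c0 : Continuous fun s : ℝ => s ^ (n + p - 1) := by
    rw [continuous_iff_continuousAt]
    exact fun x => Real.continuousAt_rpow_const x _ (Or.inr hnp1)
  have hwpos : ∀ s ∈ Ici (0:ℝ), s ^ p + a ≠ 0 := by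
    intro s hs
    have : (0:ℝ) ≤ s ^ p := Real.rpow_nonneg hs p
    positivity
  exact (c0.continuousOn.mul
    (((c1.continuousOn.add continuousOn_const)).rpow_const fun s hs => Or.inl (hwpos s hs))).mul
    ((continuous_const.mul c1).add continuous_const).continuousOn

private lemma intervalIntegrable_g {n p a β : ℝ} (hn : 2 ≤ n) (hp : 0 < p) (ha : 0 < a)
    (hβ0 : 0 ≤ β) (hnp1 : 0 ≤ n + p - 1) {b : ℝ} (hb : 0 ≤ b) :
    IntervalIntegrable
      (fun s : ℝ => s ^ (n + p - 1) * (s ^ p + a) ^ (-(n + 1)) * (β * s ^ p + (n + p) * a))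
      volume 0 b := by
  apply ContinuousOn.intervalIntegrable
  apply (contg_Ici hn hp ha hβ0 hnp1).mono
  rw [uIcc_of_le hb]
  exact fun x hx => hx.1

private lemma G_eq_integral {n p a β : ℝ} (hn : 2 ≤ n) (hp : 0 < p) (ha : 0 < a) (hβ0 : 0 ≤ β)
    (hβ : n + p - n * p = β) (hnp1 : 0 ≤ n + p - 1) {s : ℝ} (hs : 0 ≤ s) :
    s ^ (n + p) * (s ^ p + a) ^ (-n)
      = ∫ t in (0:ℝ)..s, t ^ (n + p - 1) * (t ^ p + a) ^ (-(n + 1)) * (β * t ^ p + (n + p) * a) := by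
  have hG0 : (0:ℝ) ^ (n + p) * ((0:ℝ) ^ p + a) ^ (-n) = 0 := by
    rw [Real.zero_rpow (by positivity : n + p ≠ 0)]; ring
  rcases eq_or_lt_of_le hs with h0 | hs'
  · rw [← h0, intervalIntegral.integral_same]; exact hG0
  · have c1 : Continuous fun s : ℝ => s ^ p := by
      rw [continuous_iff_continuousAt]
      exact fun x => Real.continuousAt_rpow_const x p (Or.inr hp.le)
    have c0 : Continuous fun s : ℝ => s ^ (n + p) := by
      rw [continuous_iff_continuousAt]
      exact fun x => Real.continuousAt_rpow_const x _ (Or.inr (by positivity))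
    have hwpos : ∀ x ∈ Icc (0:ℝ) s, x ^ p + a ≠ 0 := by
      intro x hx
      have : (0:ℝ) ≤ x ^ p := Real.rpow_nonneg hx.1 p
      positivity
    have hGcont : ContinuousOn (fun s : ℝ => s ^ (n + p) * (s ^ p + a) ^ (-n)) (Icc 0 s) :=
      c0.continuousOn.mul
        ((c1.continuousOn.add continuousOn_const).rpow_const fun x hx => Or.inl (hwpos x hx))
    rw [intervalIntegral.integral_eq_sub_of_hasDeriv_right_of_le hs hGcont
      (fun x hx => (hasDerivAt_G hp ha hβ hx.1).hasDerivWithinAt)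
      (intervalIntegrable_g hn hp ha hβ0 hnp1 hs), hG0, sub_zero]


/-- Normalization of the limiting bubble (conclusion of Lemma 4.2(ii)):
`∫_{ℝ^N} F^o(x)^{-β} exp(λ_N (1-β/N) (N/(N-1)) Φ(x)) dx = 1`. -/
theorem stmt14 {N : ℕ} (hN : 2 ≤ N)
    (F Fo : Euc N → ℝ)
    (hF0 : ∀ x, 0 ≤ F x)
    (hFconv : ConvexOn ℝ Set.univ F)
    (hFeven : ∀ x, F (-x) = F x)
    (hFhom : ∀ (t : ℝ) (x : Euc N), F (t • x) = |t| * F x)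
    (hFsmooth : ContDiffOn ℝ 2 F {(0 : Euc N)}ᶜ)
    (hFpos : ∀ x : Euc N, x ≠ 0 → 0 < F x)
    (hFo : ∀ x, Fo x = sSup {r : ℝ | ∃ ξ, F ξ ≤ 1 ∧ r = ⟪x, ξ⟫})
    (κ : ℝ) (hκ : κ = (volume {x : Euc N | Fo x ≤ 1}).toReal)
    (lam : ℝ) (hlam : lam = (N : ℝ) ^ ((N : ℝ) / ((N : ℝ) - 1)) * κ ^ (1 / ((N : ℝ) - 1)))
    (β : ℝ) (hβ0 : 0 ≤ β) (hβN : β < N)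
    (Φ : Euc N → ℝ)
    (hΦ : ∀ x, Φ x = -(((N : ℝ) - 1) / (lam * (1 - β / N))) *
      Real.log (1 + lam * Fo x ^ (((N : ℝ) / ((N : ℝ) - 1)) * (1 - β / N)) /
        ((N : ℝ) ^ ((N : ℝ) / ((N : ℝ) - 1)) * (1 - β / N) ^ (1 / ((N : ℝ) - 1))))) :
    ∫⁻ x : Euc N, ENNReal.ofReal
      (Fo x ^ (-β) * Real.exp (lam * (1 - β / N) * ((N : ℝ) / ((N : ℝ) - 1)) * Φ x)) = 1 := by

  haveI : Nonempty (Fin N) := ⟨⟨0, by omega⟩⟩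
  have hn2 : (2:ℝ) ≤ (N:ℝ) := by exact_mod_cast hN
  set n : ℝ := (N:ℝ) with hn
  have hn1 : (0:ℝ) < n - 1 := by linarith
  have hnpos : (0:ℝ) < n := by linarith
  have hβn : β < n := hβN
  have hnb : (0:ℝ) < n - β := by linarith
  -- ## Basic properties of F
  have hF0' : F 0 = 0 := by simpa using hFhom 0 0
  have hFcont : ContinuousOn F {(0 : Euc N)}ᶜ := hFsmooth.continuousOn
  have hsub : Metric.sphere (0 : Euc N) 1 ⊆ {(0 : Euc N)}ᶜ := by
    intro x hx
    rw [mem_sphere_zero_iff_norm] at hx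
    simp only [mem_compl_iff, mem_singleton_iff]
    intro h; rw [h] at hx; simp at hx
  have hsph : (Metric.sphere (0 : Euc N) 1).Nonempty := NormedSpace.sphere_nonempty.2 zero_le_one
  obtain ⟨xm, hxm, hmin⟩ := (isCompact_sphere (0 : Euc N) 1).exists_isMinOn hsph (hFcont.mono hsub)
  obtain ⟨xM, hxM, hmax⟩ := (isCompact_sphere (0 : Euc N) 1).exists_isMaxOn hsph (hFcont.mono hsub)
  set c : ℝ := F xm with hcdef
  set C : ℝ := F xM with hCdef
  have hc : 0 < c := hFpos xm (hsub hxm)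
  have hC : 0 < C := hFpos xM (hsub hxM)
  have hnorm_one : ∀ x : Euc N, x ≠ 0 → ‖x‖⁻¹ • x ∈ Metric.sphere (0 : Euc N) 1 := by
    intro x hx
    rw [mem_sphere_zero_iff_norm, norm_smul, norm_inv, norm_norm]
    exact inv_mul_cancel₀ (norm_ne_zero_iff.2 hx)
  have hFsc : ∀ x : Euc N, x ≠ 0 → F x = ‖x‖ * F (‖x‖⁻¹ • x) := by
    intro x hx
    have : F (‖x‖ • (‖x‖⁻¹ • x)) = |‖x‖| * F (‖x‖⁻¹ • x) := hFhom _ _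
    rwa [smul_inv_smul₀ (norm_ne_zero_iff.2 hx), abs_of_nonneg (norm_nonneg x)] at this
  have hlow : ∀ x : Euc N, c * ‖x‖ ≤ F x := by
    intro x
    rcases eq_or_ne x 0 with rfl | hx
    · simp [hF0']
    · rw [hFsc x hx]
      have := hmin (hnorm_one x hx)
      have hxn : 0 < ‖x‖ := norm_pos_iff.2 hx
      rw [mul_comm c ‖x‖]
      exact mul_le_mul_of_nonneg_left this hxn.le
  have hup : ∀ x : Euc N, F x ≤ C * ‖x‖ := by
    intro x
    rcases eq_or_ne x 0 with rfl | hx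
    · simp [hF0', hC.le]
    · rw [hFsc x hx]
      have := hmax (hnorm_one x hx)
      have hxn : 0 < ‖x‖ := norm_pos_iff.2 hx
      rw [mul_comm C ‖x‖]
      exact mul_le_mul_of_nonneg_left this hxn.le
  -- ## Basic properties of Fo
  set S : Euc N → Set ℝ := fun x => {r : ℝ | ∃ ξ, F ξ ≤ 1 ∧ r = ⟪x, ξ⟫} with hSdef
  have hne : ∀ x, (S x).Nonempty := by
    intro x
    exact ⟨0, 0, by simp [hF0'], by simp⟩
  have hub : ∀ (x ξ : Euc N), F ξ ≤ 1 → ⟪x, ξ⟫ ≤ ‖x‖ * c⁻¹ := by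
    intro x ξ hξ
    have h1 : ⟪x, ξ⟫ ≤ ‖x‖ * ‖ξ‖ := real_inner_le_norm x ξ
    have h2 : ‖ξ‖ ≤ c⁻¹ := by
      have := hlow ξ
      rw [inv_eq_one_div, le_div_iff₀ hc]
      nlinarith
    calc ⟪x, ξ⟫ ≤ ‖x‖ * ‖ξ‖ := h1
      _ ≤ ‖x‖ * c⁻¹ := mul_le_mul_of_nonneg_left h2 (norm_nonneg x)
  have hbdd : ∀ x, BddAbove (S x) := by
    intro x
    refine ⟨‖x‖ * c⁻¹, ?_⟩
    rintro r ⟨ξ, hξ, rfl⟩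
    exact hub x ξ hξ
  have hmem_le : ∀ (x ξ : Euc N), F ξ ≤ 1 → ⟪x, ξ⟫ ≤ Fo x := by
    intro x ξ hξ
    rw [hFo]
    exact le_csSup (hbdd x) ⟨ξ, hξ, rfl⟩
  have hFole : ∀ x : Euc N, Fo x ≤ ‖x‖ * c⁻¹ := by
    intro x
    rw [hFo]
    apply csSup_le (hne x)
    rintro r ⟨ξ, hξ, rfl⟩
    exact hub x ξ hξ
  have hFononneg : ∀ x : Euc N, 0 ≤ Fo x := by
    intro x
    have := hmem_le x 0 (by simp [hF0'])
    simpa using this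
  have hFoge : ∀ x : Euc N, ‖x‖ * C⁻¹ ≤ Fo x := by
    intro x
    rcases eq_or_ne x 0 with rfl | hx
    · simpa using hFononneg 0
    · have hxn : 0 < ‖x‖ := norm_pos_iff.2 hx
      have hξ : F ((C * ‖x‖)⁻¹ • x) ≤ 1 := by
        rw [hFhom, abs_of_nonneg (by positivity)]
        have := hup x
        rw [inv_mul_le_one₀ (by positivity)]
        exact this
      have h2 : ⟪x, (C * ‖x‖)⁻¹ • x⟫ = ‖x‖ * C⁻¹ := by
        rw [real_inner_smul_right, real_inner_self_eq_norm_sq]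
        field_simp
      have := hmem_le x _ hξ
      rwa [h2] at this
  have hFopos : ∀ x : Euc N, x ≠ 0 → 0 < Fo x := by
    intro x hx
    have hxn : 0 < ‖x‖ := norm_pos_iff.2 hx
    calc (0:ℝ) < ‖x‖ * C⁻¹ := by positivity
      _ ≤ Fo x := hFoge x
  have hsmul_le : ∀ t : ℝ, 0 < t → ∀ x : Euc N, Fo (t • x) ≤ t * Fo x := by
    intro t ht x
    rw [hFo]
    apply csSup_le (hne _)
    rintro r ⟨ξ, hξ, rfl⟩
    rw [real_inner_smul_left]
    exact mul_le_mul_of_nonneg_left (hmem_le x ξ hξ) ht.le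
  have hsmul : ∀ t : ℝ, 0 < t → ∀ x : Euc N, Fo (t • x) = t * Fo x := by
    intro t ht x
    refine le_antisymm (hsmul_le t ht x) ?_
    have h2 := hsmul_le t⁻¹ (by positivity) (t • x)
    rw [inv_smul_smul₀ ht.ne'] at h2
    calc t * Fo x ≤ t * (t⁻¹ * Fo (t • x)) := mul_le_mul_of_nonneg_left h2 ht.le
      _ = Fo (t • x) := by field_simp
  have hsubadd : ∀ x y : Euc N, Fo (x + y) ≤ Fo x + Fo y := by
    intro x y
    rw [hFo]
    apply csSup_le (hne _)
    rintro r ⟨ξ, hξ, rfl⟩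
    rw [inner_add_left]
    exact add_le_add (hmem_le x ξ hξ) (hmem_le y ξ hξ)
  have hFocont : Continuous Fo := by
    have hlip : ∀ x y : Euc N, Fo x - Fo y ≤ c⁻¹ * ‖x - y‖ := by
      intro x y
      have h1 : Fo x ≤ Fo y + Fo (x - y) := by
        have := hsubadd y (x - y)
        simpa using this
      have h2 : Fo (x - y) ≤ ‖x - y‖ * c⁻¹ := hFole _
      nlinarith
    apply (LipschitzWith.of_dist_le_mul (K := (c⁻¹).toNNReal) (f := Fo) ?_).continuous
    intro x y
    rw [Real.dist_eq, dist_eq_norm, Real.coe_toNNReal _ (by positivity)]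
    rw [abs_le]
    constructor
    · have := hlip y x
      rw [← norm_neg (y - x)] at this
      simp only [neg_sub] at this
      linarith
    · exact hlip x y
  -- ## Measure of the Wulff shape
  set W : Set (Euc N) := {x : Euc N | Fo x ≤ 1} with hWdef
  have hWfin : volume W < ⊤ := by
    apply lt_of_le_of_lt (measure_mono ?_) (measure_closedBall_lt_top (x := (0:Euc N)) (r := C))
    intro x hx
    rw [Metric.mem_closedBall, dist_zero_right]
    have h1 := hFoge x
    have h2 : Fo x ≤ 1 := hx
    have : ‖x‖ * C⁻¹ ≤ 1 := le_trans h1 h2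
    rw [← mul_le_mul_iff_of_pos_right (show (0:ℝ) < C⁻¹ by positivity)]
    calc ‖x‖ * C⁻¹ ≤ 1 := this
      _ ≤ C * C⁻¹ := by
          rw [mul_inv_cancel₀ hC.ne']
  have hWpos : 0 < volume W := by
    apply lt_of_lt_of_le (Metric.measure_closedBall_pos volume (0:Euc N) hc) (measure_mono ?_)
    intro x hx
    rw [Metric.mem_closedBall, dist_zero_right] at hx
    show Fo x ≤ 1
    calc Fo x ≤ ‖x‖ * c⁻¹ := hFole x
      _ ≤ c * c⁻¹ := mul_le_mul_of_nonneg_right hx (by positivity)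
      _ = 1 := mul_inv_cancel₀ hc.ne'
  have hκpos : 0 < κ := by
    rw [hκ]
    exact ENNReal.toReal_pos hWpos.ne' hWfin.ne
  have hκvol : ENNReal.ofReal κ = volume W := by
    rw [hκ]
    exact ENNReal.ofReal_toReal hWfin.ne
  have hscale : ∀ r : ℝ, 0 < r →
      volume {x : Euc N | Fo x ≤ r} = ENNReal.ofReal (r ^ N) * ENNReal.ofReal κ := by
    intro r hr
    have hset : {x : Euc N | Fo x ≤ r} = (r • W : Set (Euc N)) := by
      ext x
      rw [Set.mem_smul_set_iff_inv_smul_mem₀ hr.ne']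
      simp only [hWdef, mem_setOf_eq]
      rw [hsmul r⁻¹ (by positivity) x]
      constructor
      · intro h
        rw [inv_mul_le_one₀ hr]
        exact h
      · intro h
        rw [inv_mul_le_one₀ hr] at h
        exact h
    rw [hset, Measure.addHaar_smul, hκvol, finrank_euclideanSpace_fin,
      abs_of_nonneg (by positivity : (0:ℝ) ≤ r ^ N)]
  -- ## Constants
  set p : ℝ := (n - β) / (n - 1) with hpdef
  have hp : 0 < p := div_pos hnb hn1
  have hβkey : n + p - n * p = β := by
    rw [hpdef]
    field_simp
    ring
  have hnp1 : (0:ℝ) ≤ n + p - 1 := by linarith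
  have h1βn : (0:ℝ) < 1 - β / n := by
    rw [sub_pos, div_lt_one hnpos]
    exact hβn
  have hlampos : 0 < lam := by
    rw [hlam]
    exact mul_pos (Real.rpow_pos_of_pos hnpos _) (Real.rpow_pos_of_pos hκpos _)
  set M : ℝ := n ^ (n / (n - 1)) * (1 - β / n) ^ (1 / (n - 1)) with hMdef
  have hMpos : 0 < M := mul_pos (Real.rpow_pos_of_pos hnpos _) (Real.rpow_pos_of_pos h1βn _)
  set a : ℝ := lam / M with hadef
  have ha : 0 < a := div_pos hlampos hMpos
  have ha2 : a = (κ / (1 - β / n)) ^ (1 / (n - 1)) := by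
    rw [hadef, hlam, hMdef, Real.div_rpow hκpos.le h1βn.le,
      mul_div_mul_left _ _ (Real.rpow_pos_of_pos hnpos (n / (n - 1))).ne']
  have key : n * κ / (n - β) = a ^ (n - 1) := by
    have hbase : (0:ℝ) ≤ κ / (1 - β / n) := by positivity
    rw [ha2, ← Real.rpow_mul hbase,
      show 1 / (n - 1) * (n - 1) = 1 by field_simp, Real.rpow_one]
    rw [show (1:ℝ) - β / n = (n - β) / n by field_simp]
    field_simp
  -- ## Pointwise identity for the integrand
  have hintegrand : ∀ x : Euc N, x ≠ 0 →
      Fo x ^ (-β) * Real.exp (lam * (1 - β / n) * (n / (n - 1)) * Φ x)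
      = (Fo x)⁻¹ ^ (n + p) * ((Fo x)⁻¹ ^ p + a) ^ (-n) := by
    intro x hx
    have hr : 0 < Fo x := hFopos x hx
    set r : ℝ := Fo x with hrdef
    have hrp : 0 < r ^ p := Real.rpow_pos_of_pos hr p
    have hpe : n / (n - 1) * (1 - β / n) = p := by
      rw [hpdef]; field_simp
    have hXeq : 1 + lam * r ^ (n / (n - 1) * (1 - β / n)) / M = 1 + a * r ^ p := by
      rw [hpe, hadef]; ring
    have hXpos : 0 < 1 + a * r ^ p := by have := mul_pos ha hrp; linarith
    have hexp : lam * (1 - β / n) * (n / (n - 1)) * Φ x = Real.log (1 + a * r ^ p) * (-n) := by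
      rw [hΦ x, ← hrdef, hXeq]
      have h1 : lam * (1 - β / n) ≠ 0 := by positivity
      field_simp
    rw [hexp, ← Real.rpow_def_of_pos hXpos]
    -- now: r ^ (-β) * (1 + a * r ^ p) ^ (-n) = (r⁻¹) ^ (n+p) * ((r⁻¹) ^ p + a) ^ (-n)
    have e1 : (r⁻¹) ^ p + a = r ^ (-p) * (1 + a * r ^ p) := by
      rw [Real.inv_rpow hr.le, ← Real.rpow_neg hr.le]
      have hx : r ^ (-p) * r ^ p = 1 := by rw [← Real.rpow_add hr]; simp
      linear_combination (-a) * hx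
    have e2 : ((r⁻¹) ^ p + a) ^ (-n) = r ^ (p * n) * (1 + a * r ^ p) ^ (-n) := by
      rw [e1, Real.mul_rpow (Real.rpow_nonneg hr.le _) hXpos.le,
        ← Real.rpow_mul hr.le]
      ring_nf
    have e3 : (r⁻¹) ^ (n + p) = r ^ (-(n + p)) := by
      rw [Real.inv_rpow hr.le, ← Real.rpow_neg hr.le]
    rw [e2, e3, ← mul_assoc, ← Real.rpow_add hr]
    congr 2
    linarith [hβkey]
  -- ## a.e. rewrite and layer cake
  have hg1nonneg : ∀ t : ℝ, 0 < t →
      0 ≤ t ^ (n + p - 1) * (t ^ p + a) ^ (-(n + 1)) * (β * t ^ p + (n + p) * a) := by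
    intro t ht
    have h1 : (0:ℝ) < t ^ (n + p - 1) := Real.rpow_pos_of_pos ht _
    have hsp : (0:ℝ) < t ^ p := Real.rpow_pos_of_pos ht _
    have h2 : (0:ℝ) < (t ^ p + a) ^ (-(n + 1)) := Real.rpow_pos_of_pos (by linarith) _
    have h3 : (0:ℝ) < β * t ^ p + (n + p) * a := by nlinarith
    positivity
  have hae0 : ∀ᵐ (x : Euc N) ∂volume, x ≠ 0 := by
    rw [MeasureTheory.ae_iff]
    simpa using measure_singleton (0 : Euc N)
  have step1 : ∫⁻ x : Euc N, ENNReal.ofReal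
      (Fo x ^ (-β) * Real.exp (lam * (1 - β / n) * (n / (n - 1)) * Φ x))
      = ∫⁻ x : Euc N, ENNReal.ofReal (∫ t in (0:ℝ)..(Fo x)⁻¹,
          t ^ (n + p - 1) * (t ^ p + a) ^ (-(n + 1)) * (β * t ^ p + (n + p) * a)) := by
    apply lintegral_congr_ae
    filter_upwards [hae0] with x hx
    rw [hintegrand x hx,
      G_eq_integral hn2 hp ha hβ0 hβkey hnp1 (inv_nonneg.2 (hFononneg x))]
  rw [step1]
  have step2 := MeasureTheory.lintegral_comp_eq_lintegral_meas_le_mul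
    (volume : Measure (Euc N))
    (f := fun x => (Fo x)⁻¹)
    (g := fun t => t ^ (n + p - 1) * (t ^ p + a) ^ (-(n + 1)) * (β * t ^ p + (n + p) * a))
    (Filter.Eventually.of_forall fun x => inv_nonneg.2 (hFononneg x))
    (hFocont.measurable.inv.aemeasurable)
    (fun t ht => intervalIntegrable_g hn2 hp ha hβ0 hnp1 ht.le)
    (by
      rw [MeasureTheory.ae_restrict_iff' measurableSet_Ioi]
      exact Filter.Eventually.of_forall fun t ht => hg1nonneg t ht)
  rw [step2]
  -- ## superlevel-set measures
  have step3 : ∫⁻ t in Ioi (0:ℝ), volume {x : Euc N | t ≤ (Fo x)⁻¹}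
        * ENNReal.ofReal (t ^ (n + p - 1) * (t ^ p + a) ^ (-(n + 1)) * (β * t ^ p + (n + p) * a))
      = ∫⁻ t in Ioi (0:ℝ), ENNReal.ofReal
          (κ * t ^ (p - 1) * (t ^ p + a) ^ (-(n + 1)) * (β * t ^ p + (n + p) * a)) := by
    apply MeasureTheory.setLIntegral_congr_fun measurableSet_Ioi
    intro t ht
    beta_reduce
    have ht' : (0:ℝ) < t := ht
    have hFo0 : Fo 0 = 0 := le_antisymm (by simpa using hFole 0) (hFononneg 0)
    have hsetEq : {x : Euc N | t ≤ (Fo x)⁻¹} = {x : Euc N | Fo x ≤ t⁻¹} \ {0} := by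
      ext x
      simp only [mem_setOf_eq, mem_diff, mem_singleton_iff]
      constructor
      · intro h
        have hx : x ≠ 0 := by
          intro h0
          rw [h0, hFo0] at h
          simp at h
          linarith
        have hr : 0 < Fo x := hFopos x hx
        exact ⟨(le_inv_comm₀ ht' hr).mp h, hx⟩
      · rintro ⟨h, hx⟩
        have hr : 0 < Fo x := hFopos x hx
        exact (le_inv_comm₀ ht' hr).mpr h
    rw [hsetEq, measure_diff_null (measure_singleton (0 : Euc N)), hscale t⁻¹ (by positivity)]
    have hNt : ((t⁻¹ : ℝ) ^ N : ℝ) = t ^ (-n) := by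
      rw [← Real.rpow_natCast t⁻¹ N, Real.inv_rpow ht'.le, ← Real.rpow_neg ht'.le]
    have hsp : (0:ℝ) < t ^ p := Real.rpow_pos_of_pos ht' _
    have hw : (0:ℝ) < t ^ p + a := by linarith
    have hfac : t ^ (-n) * t ^ (n + p - 1) = t ^ (p - 1) := by
      rw [← Real.rpow_add ht']
      ring_nf
    rw [← ENNReal.ofReal_mul (by positivity), ← ENNReal.ofReal_mul (by positivity)]
    congr 1
    rw [hNt]
    calc t ^ (-n) * κ * (t ^ (n + p - 1) * (t ^ p + a) ^ (-(n + 1)) * (β * t ^ p + (n + p) * a))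
        = κ * (t ^ (-n) * t ^ (n + p - 1)) * (t ^ p + a) ^ (-(n + 1)) * (β * t ^ p + (n + p) * a) := by
          ring
      _ = _ := by rw [hfac]
  rw [step3]
  exact integral_D hn2 hp ha hκpos hβ0 hβkey hnb key

end
end

section
/- (Capacity of the anisotropic annulus, explicit minimizer energy) Let 0 < ρ < δ and a, b ∈ ℝ, and define h on the annulus {x : ρ < F^o(x) < δ} by h(x) = ( a (log F^o(x) - log ρ) + b (log δ - log F^o(x)) ) / (log δ - log ρ), so that h equals a on {F^o = δ} and b on {F^o = ρ}. Then ∫_{{ρ < F^o(x) < δ}} F(∇h(x))^N dx = N κ_N |b - a|^N / (log(δ/ρ))^{N-1}. -/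
open MeasureTheory Real Set
open scoped RealInnerProductSpace ENNReal
open scoped NNReal Pointwise

noncomputable section

set_option maxHeartbeats 4000000 in
/-- Capacity of the anisotropic annulus: the explicit minimizer energy
`∫_{{ρ < F^o < δ}} F(∇h)^N dx = N κ_N |b-a|^N / (log(δ/ρ))^{N-1}`. -/
theorem stmt15 {N : ℕ} (hN : 2 ≤ N)
    (F Fo : Euc N → ℝ)
    (hF0 : ∀ x, 0 ≤ F x)
    (hFconv : ConvexOn ℝ Set.univ F)
    (hFeven : ∀ x, F (-x) = F x)
    (hFhom : ∀ (t : ℝ) (x : Euc N), F (t • x) = |t| * F x)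
    (hFsmooth : ContDiffOn ℝ 2 F {(0 : Euc N)}ᶜ)
    (hFpos : ∀ x : Euc N, x ≠ 0 → 0 < F x)
    (hFo : ∀ x, Fo x = sSup {r : ℝ | ∃ ξ, F ξ ≤ 1 ∧ r = ⟪x, ξ⟫})
    (hFosmooth : ContDiffOn ℝ 1 Fo {(0 : Euc N)}ᶜ)
    (κ : ℝ) (hκ : κ = (volume {x : Euc N | Fo x ≤ 1}).toReal)
    (ρ δ : ℝ) (hρ : 0 < ρ) (hρδ : ρ < δ)
    (a b : ℝ)
    (h : Euc N → ℝ)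
    (hh : ∀ x, h x = (a * (Real.log (Fo x) - Real.log ρ) +
      b * (Real.log δ - Real.log (Fo x))) / (Real.log δ - Real.log ρ)) :
    ∫ x in {x : Euc N | ρ < Fo x ∧ Fo x < δ}, F (gradient h x) ^ N
      = (N : ℝ) * κ * |b - a| ^ N / (Real.log (δ / ρ)) ^ (N - 1) := by
  have hN1 : 1 ≤ N := by omega
  have hδ : 0 < δ := lt_trans hρ hρδ
  haveI : Nonempty (Fin N) := ⟨⟨0, by omega⟩⟩
  haveI : Nontrivial (Euc N) :=
    Module.nontrivial_of_finrank_pos (R := ℝ)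
      (by rw [finrank_euclideanSpace_fin]; omega)
  have hF00 : F 0 = 0 := by simpa using hFhom 0 0
  have hFcont : ContinuousOn F {(0 : Euc N)}ᶜ := hFsmooth.continuousOn
  obtain ⟨x₀, hx₀⟩ : (Metric.sphere (0 : Euc N) 1).Nonempty :=
    NormedSpace.sphere_nonempty.mpr zero_le_one
  have hsph : Metric.sphere (0 : Euc N) 1 ⊆ {(0 : Euc N)}ᶜ := by
    intro x hx
    rw [mem_sphere_zero_iff_norm] at hx
    simp only [mem_compl_iff, mem_singleton_iff]
    rintro rfl
    simp at hx
  obtain ⟨z, hzS, hz⟩ :=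
    (isCompact_sphere (0 : Euc N) 1).exists_isMinOn ⟨x₀, hx₀⟩ (hFcont.mono hsph)
  obtain ⟨w, hwS, hw⟩ :=
    (isCompact_sphere (0 : Euc N) 1).exists_isMaxOn ⟨x₀, hx₀⟩ (hFcont.mono hsph)
  set m := F z with hm
  set M := F w with hM
  have hmpos : 0 < m := hFpos z (hsph hzS)
  have hMpos : 0 < M := hFpos w (hsph hwS)
  have hlow : ∀ x : Euc N, m * ‖x‖ ≤ F x := by
    intro x
    rcases eq_or_ne x 0 with rfl | hx
    · simp [hF00]
    · have hnx : (0 : ℝ) < ‖x‖ := norm_pos_iff.mpr hx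
      have hmem : ‖x‖⁻¹ • x ∈ Metric.sphere (0 : Euc N) 1 := by
        rw [mem_sphere_zero_iff_norm, norm_smul, norm_inv, norm_norm, inv_mul_cancel₀ hnx.ne']
      have h1 : m ≤ F (‖x‖⁻¹ • x) := isMinOn_iff.mp hz _ hmem
      have h2 : F x = ‖x‖ * F (‖x‖⁻¹ • x) := by
        calc F x = F (‖x‖ • ‖x‖⁻¹ • x) := by rw [smul_inv_smul₀ hnx.ne']
          _ = |‖x‖| * F (‖x‖⁻¹ • x) := hFhom _ _
          _ = ‖x‖ * F (‖x‖⁻¹ • x) := by rw [abs_of_pos hnx]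
      nlinarith
  have hup : ∀ x : Euc N, F x ≤ M * ‖x‖ := by
    intro x
    rcases eq_or_ne x 0 with rfl | hx
    · simp [hF00]
    · have hnx : (0 : ℝ) < ‖x‖ := norm_pos_iff.mpr hx
      have hmem : ‖x‖⁻¹ • x ∈ Metric.sphere (0 : Euc N) 1 := by
        rw [mem_sphere_zero_iff_norm, norm_smul, norm_inv, norm_norm, inv_mul_cancel₀ hnx.ne']
      have h1 : F (‖x‖⁻¹ • x) ≤ M := isMaxOn_iff.mp hw _ hmem
      have h2 : F x = ‖x‖ * F (‖x‖⁻¹ • x) := by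
        calc F x = F (‖x‖ • ‖x‖⁻¹ • x) := by rw [smul_inv_smul₀ hnx.ne']
          _ = |‖x‖| * F (‖x‖⁻¹ • x) := hFhom _ _
          _ = ‖x‖ * F (‖x‖⁻¹ • x) := by rw [abs_of_pos hnx]
      nlinarith
  -- basic facts about Fo
  have hbddS : ∀ x : Euc N, BddAbove {r : ℝ | ∃ ξ, F ξ ≤ 1 ∧ r = ⟪x, ξ⟫} := by
    intro x
    refine ⟨‖x‖ / m, ?_⟩
    rintro r ⟨ξ, hξ, rfl⟩
    have h1 : m * ‖ξ‖ ≤ 1 := le_trans (hlow ξ) hξ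
    have h2 : ⟪x, ξ⟫ ≤ ‖x‖ * ‖ξ‖ := real_inner_le_norm x ξ
    rw [le_div_iff₀ hmpos]
    nlinarith [norm_nonneg x, norm_nonneg ξ]
  have hSne : ∀ x : Euc N, (0 : ℝ) ∈ {r : ℝ | ∃ ξ, F ξ ≤ 1 ∧ r = ⟪x, ξ⟫} := by
    intro x
    exact ⟨0, by simp [hF00], by simp⟩
  have hFo_mem : ∀ (x ξ : Euc N), F ξ ≤ 1 → ⟪x, ξ⟫ ≤ Fo x := by
    intro x ξ hξ
    rw [hFo]
    exact le_csSup (hbddS x) ⟨ξ, hξ, rfl⟩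
  have hFo_csSup_le : ∀ (x : Euc N) (r : ℝ), (∀ ξ, F ξ ≤ 1 → ⟪x, ξ⟫ ≤ r) → Fo x ≤ r := by
    intro x r hr
    rw [hFo]
    refine csSup_le ⟨0, hSne x⟩ ?_
    rintro s ⟨ξ, hξ, rfl⟩
    exact hr ξ hξ
  have hFo_nonneg : ∀ x, 0 ≤ Fo x := by
    intro x
    simpa using hFo_mem x 0 (by simp [hF00])
  have hFo_le : ∀ x : Euc N, Fo x ≤ ‖x‖ / m := by
    intro x
    refine hFo_csSup_le x _ ?_
    intro ξ hξ
    have h1 : m * ‖ξ‖ ≤ 1 := le_trans (hlow ξ) hξ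
    have h2 : ⟪x, ξ⟫ ≤ ‖x‖ * ‖ξ‖ := real_inner_le_norm x ξ
    rw [le_div_iff₀ hmpos]
    nlinarith [norm_nonneg x, norm_nonneg ξ]
  have hkey : ∀ (x ξ : Euc N), ⟪x, ξ⟫ ≤ Fo x * F ξ := by
    intro x ξ
    rcases eq_or_ne ξ 0 with rfl | hξ0
    · simp [hF00]
    · have hFξ : 0 < F ξ := hFpos ξ hξ0
      have h1 : F ((F ξ)⁻¹ • ξ) ≤ 1 := by
        rw [hFhom, abs_of_pos (inv_pos.2 hFξ), inv_mul_cancel₀ hFξ.ne']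
      have h2 := hFo_mem x _ h1
      rw [real_inner_smul_right] at h2
      calc ⟪x, ξ⟫ = F ξ * ((F ξ)⁻¹ * ⟪x, ξ⟫) := by field_simp
        _ ≤ F ξ * Fo x := mul_le_mul_of_nonneg_left h2 hFξ.le
        _ = Fo x * F ξ := mul_comm _ _
  have hFo_pos : ∀ x : Euc N, x ≠ 0 → 0 < Fo x := by
    intro x hx
    have hnx : (0 : ℝ) < ‖x‖ := norm_pos_iff.mpr hx
    have hFx : 0 < F x := hFpos x hx
    have h1 : F ((F x)⁻¹ • x) ≤ 1 := by
      rw [hFhom, abs_of_pos (inv_pos.2 hFx), inv_mul_cancel₀ hFx.ne']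
    have h2 := hFo_mem x _ h1
    rw [real_inner_smul_right, real_inner_self_eq_norm_sq] at h2
    have h3 : 0 < (F x)⁻¹ * ‖x‖ ^ 2 := by positivity
    linarith
  have hFo_low : ∀ x : Euc N, ‖x‖ / M ≤ Fo x := by
    intro x
    rcases eq_or_ne x 0 with rfl | hx
    · simpa using hFo_nonneg 0
    · have hnx : (0 : ℝ) < ‖x‖ := norm_pos_iff.mpr hx
      have h1 : F ((M * ‖x‖)⁻¹ • x) ≤ 1 := by
        rw [hFhom, abs_of_pos (by positivity : (0:ℝ) < (M * ‖x‖)⁻¹)]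
        rw [inv_mul_le_iff₀ (by positivity), mul_one]
        exact hup x
      have h2 := hFo_mem x _ h1
      rw [real_inner_smul_right, real_inner_self_eq_norm_sq] at h2
      have h3 : (M * ‖x‖)⁻¹ * ‖x‖ ^ 2 = ‖x‖ / M := by
        field_simp
      linarith [h3 ▸ h2]
  have hFo0 : Fo 0 = 0 := le_antisymm (by simpa using hFo_le 0) (hFo_nonneg 0)
  have hFo_contOn : ContinuousOn Fo {(0 : Euc N)}ᶜ := hFosmooth.continuousOn
  have hFo_cont : Continuous Fo := by
    rw [continuous_iff_continuousAt]
    intro x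
    rcases eq_or_ne x 0 with rfl | hx
    · have ht : Filter.Tendsto Fo (nhds 0) (nhds 0) := by
        apply squeeze_zero hFo_nonneg hFo_le
        have : Filter.Tendsto (fun x : Euc N => ‖x‖) (nhds 0) (nhds 0) := by
          simpa using continuous_norm.tendsto (0 : Euc N)
        simpa using this.div_const m
      simpa [ContinuousAt, hFo0] using ht
    · exact hFo_contOn.continuousAt (isOpen_compl_singleton.mem_nhds hx)
  have hFo_smul : ∀ (t : ℝ), 0 < t → ∀ x : Euc N, Fo (t • x) = t * Fo x := by
    have hle : ∀ (t : ℝ), 0 ≤ t → ∀ x : Euc N, Fo (t • x) ≤ t * Fo x := by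
      intro t ht x
      refine hFo_csSup_le _ _ ?_
      intro ξ hξ
      rw [real_inner_smul_left]
      exact mul_le_mul_of_nonneg_left (hFo_mem x ξ hξ) ht
    intro t ht x
    refine le_antisymm (hle t ht.le x) ?_
    have h2 := hle t⁻¹ (inv_nonneg.2 ht.le) (t • x)
    rw [inv_smul_smul₀ ht.ne' x] at h2
    calc t * Fo x ≤ t * (t⁻¹ * Fo (t • x)) := mul_le_mul_of_nonneg_left h2 ht.le
      _ = Fo (t • x) := by field_simp
  have hFo_conv : ConvexOn ℝ univ Fo := by
    refine ⟨convex_univ, ?_⟩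
    intro p _ q _ α β hα hβ hαβ
    refine hFo_csSup_le _ _ ?_
    intro ξ hξ
    rw [inner_add_left, real_inner_smul_left, real_inner_smul_left]
    have h1 := mul_le_mul_of_nonneg_left (hFo_mem p ξ hξ) hα
    have h2 := mul_le_mul_of_nonneg_left (hFo_mem q ξ hξ) hβ
    simp only [smul_eq_mul]
    linarith
  -- differentiability of Fo away from 0
  have hdiffFo : ∀ x : Euc N, x ≠ 0 → DifferentiableAt ℝ Fo x := fun x hx =>
    (hFosmooth.contDiffAt (isOpen_compl_singleton.mem_nhds hx)).differentiableAt one_ne_zero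
  have hgradrep : ∀ x : Euc N, x ≠ 0 → ∀ v, fderiv ℝ Fo x v = ⟪gradient Fo x, v⟫ := by
    intro x hx v
    have h1 := (hdiffFo x hx).hasGradientAt.hasFDerivAt
    rw [h1.fderiv, InnerProductSpace.toDual_apply_apply]
  -- Euler identity
  have heuler : ∀ x : Euc N, x ≠ 0 → fderiv ℝ Fo x x = Fo x := by
    intro x hx
    have hline : HasDerivAt (fun t : ℝ => t • x) x 1 := by
      simpa using (hasDerivAt_id (1 : ℝ)).smul_const x
    have hFd : HasFDerivAt Fo (fderiv ℝ Fo x) ((1 : ℝ) • x) := by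
      rw [one_smul]
      exact (hdiffFo x hx).hasFDerivAt
    have h2 : HasDerivAt (fun t : ℝ => Fo (t • x)) (fderiv ℝ Fo x x) 1 :=
      hFd.comp_hasDerivAt 1 hline
    have hev : (fun t : ℝ => Fo (t • x)) =ᶠ[nhds (1 : ℝ)] fun t => t * Fo x := by
      filter_upwards [Ioi_mem_nhds (zero_lt_one)] with t ht
      exact hFo_smul t ht x
    have hmul : HasDerivAt (fun t : ℝ => t * Fo x) (Fo x) 1 := by
      simpa using (hasDerivAt_id (1 : ℝ)).mul_const (Fo x)
    have h3 : HasDerivAt (fun t : ℝ => Fo (t • x)) (Fo x) 1 :=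
      hmul.congr_of_eventuallyEq hev
    exact h2.unique h3
  -- subgradient inequality
  have hsub : ∀ x : Euc N, x ≠ 0 → ∀ y, fderiv ℝ Fo x y ≤ Fo y := by
    intro x hx y
    have hline : HasDerivAt (fun t : ℝ => x + t • (y - x)) (y - x) 0 := by
      simpa using ((hasDerivAt_id (0 : ℝ)).smul_const (y - x)).const_add x
    have hFd : HasFDerivAt Fo (fderiv ℝ Fo x) (x + (0 : ℝ) • (y - x)) := by
      rw [zero_smul, add_zero]
      exact (hdiffFo x hx).hasFDerivAt
    have hg : HasDerivAt (fun t : ℝ => Fo (x + t • (y - x))) (fderiv ℝ Fo x (y - x)) 0 :=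
      hFd.comp_hasDerivAt 0 hline
    have hslope : ∀ t : ℝ, t ∈ Ioo (0 : ℝ) 1 →
        (Fo (x + t • (y - x)) - Fo x) / t ≤ Fo y - Fo x := by
      rintro t ⟨ht0, ht1⟩
      have hconv := hFo_conv.2 (mem_univ x) (mem_univ y)
        (by linarith : (0:ℝ) ≤ 1 - t) ht0.le (by ring)
      have hxeq : x + t • (y - x) = (1 - t) • x + t • y := by
        rw [smul_sub, sub_smul, one_smul]
        abel
      rw [div_le_iff₀ ht0, hxeq]
      simp only [smul_eq_mul] at hconv
      nlinarith
    have h4 := hasDerivAt_iff_tendsto_slope.mp hg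
    have h5 : Filter.Tendsto (slope (fun t : ℝ => Fo (x + t • (y - x))) 0)
        (nhdsWithin (0:ℝ) (Ioi 0)) (nhds (fderiv ℝ Fo x (y - x))) :=
      h4.mono_left (nhdsWithin_mono 0 fun u hu => ne_of_gt hu)
    have hev : ∀ᶠ u in nhdsWithin (0:ℝ) (Ioi 0),
        slope (fun t : ℝ => Fo (x + t • (y - x))) 0 u ≤ Fo y - Fo x := by
      filter_upwards [Ioo_mem_nhdsGT_of_mem (⟨le_refl (0:ℝ), zero_lt_one⟩ : (0:ℝ) ∈ Ico (0:ℝ) 1)] with u hu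
      rw [slope_def_field]
      simp only [zero_smul, add_zero, sub_zero]
      exact hslope u hu
    have h6 : fderiv ℝ Fo x (y - x) ≤ Fo y - Fo x := le_of_tendsto h5 hev
    have h7 := (fderiv ℝ Fo x).map_sub y x
    have h8 := heuler x hx
    linarith
  -- the key fact : F (∇ Fo x) = 1 for x ≠ 0
  have hFgrad1 : ∀ x : Euc N, x ≠ 0 → F (gradient Fo x) = 1 := by
    intro x hx
    set η := gradient Fo x with hη
    have hηsub : ∀ y, ⟪η, y⟫ ≤ Fo y := fun y => by
      rw [← hgradrep x hx y]; exact hsub x hx y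
    have hηx : ⟪η, x⟫ = Fo x := by rw [← hgradrep x hx x]; exact heuler x hx
    have hge : 1 ≤ F η := by
      have h1 : Fo x ≤ Fo x * F η := by
        calc Fo x = ⟪x, η⟫ := by rw [real_inner_comm]; exact hηx.symm
          _ ≤ Fo x * F η := hkey x η
      have h2 := hFo_pos x hx
      nlinarith
    have hle : F η ≤ 1 := by
      by_contra hgt
      push_neg at hgt
      have hK : Convex ℝ {ξ : Euc N | F ξ ≤ 1} := by
        simpa using hFconv.convex_le 1
      have hKc : IsClosed {ξ : Euc N | F ξ ≤ 1} := by
        rw [← isOpen_compl_iff]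
        have hset : {ξ : Euc N | F ξ ≤ 1}ᶜ = {(0 : Euc N)}ᶜ ∩ F ⁻¹' (Ioi 1) := by
          ext ξ
          simp only [mem_compl_iff, mem_setOf_eq, not_le, mem_inter_iff, mem_preimage,
            mem_Ioi, mem_singleton_iff]
          constructor
          · intro h1
            refine ⟨?_, h1⟩
            rintro rfl
            rw [hF00] at h1
            linarith
          · tauto
        rw [hset]
        exact hFcont.isOpen_inter_preimage isOpen_compl_singleton isOpen_Ioi
      have hηK : η ∉ {ξ : Euc N | F ξ ≤ 1} := by
        simp only [mem_setOf_eq, not_le]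
        exact hgt
      obtain ⟨f, u, hfK, hfη⟩ := geometric_hahn_banach_closed_point hK hKc hηK
      set y := (InnerProductSpace.toDual ℝ (Euc N)).symm f with hy
      have hyv : ∀ v, ⟪y, v⟫ = f v := fun v => InnerProductSpace.toDual_symm_apply
      have hFoy : Fo y ≤ u := by
        refine hFo_csSup_le y u ?_
        intro ξ hξ
        rw [hyv ξ]
        exact le_of_lt (hfK ξ hξ)
      have h9 : ⟪η, y⟫ ≤ Fo y := hηsub y
      rw [real_inner_comm, hyv η] at h9
      linarith
    linarith
  -- set up the annulus and coefficients
  set L := Real.log δ - Real.log ρ with hLdef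
  have hL : 0 < L := sub_pos.2 (Real.log_lt_log hρ hρδ)
  set c := (a - b) / L with hcdef
  set C := (b * Real.log δ - a * Real.log ρ) / L with hCdef
  have hrep : h = fun x => c * Real.log (Fo x) + C := by
    funext x
    rw [hh x, hcdef, hCdef]
    field_simp
    ring
  set A := {x : Euc N | ρ < Fo x ∧ Fo x < δ} with hAdef
  have hA0 : ∀ x ∈ A, x ≠ 0 := by
    intro x hx
    rintro rfl
    simp only [hAdef, mem_setOf_eq, hFo0] at hx
    linarith [hx.1]
  have hgradh : ∀ x ∈ A, gradient h x = (c / Fo x) • gradient Fo x := by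
    intro x hxA
    have hx : x ≠ 0 := hA0 x hxA
    have hxA' : ρ < Fo x ∧ Fo x < δ := hxA
    have hFox : 0 < Fo x := lt_trans hρ hxA'.1
    have hd1 : HasFDerivAt (fun y => Real.log (Fo y)) ((Fo x)⁻¹ • fderiv ℝ Fo x) x :=
      (Real.hasDerivAt_log hFox.ne').comp_hasFDerivAt x (hdiffFo x hx).hasFDerivAt
    have hd2 : HasFDerivAt h ((c * (Fo x)⁻¹) • fderiv ℝ Fo x) x := by
      rw [hrep]
      have h3 := (hd1.const_mul c).add_const C
      simpa [smul_smul] using h3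
    have hDeq : (InnerProductSpace.toDual ℝ (Euc N)) ((c / Fo x) • gradient Fo x)
        = (c * (Fo x)⁻¹) • fderiv ℝ Fo x := by
      ext v
      rw [InnerProductSpace.toDual_apply_apply, real_inner_smul_left, ← hgradrep x hx v]
      simp only [ContinuousLinearMap.coe_smul', Pi.smul_apply, smul_eq_mul]
      rw [div_eq_mul_inv]
    have hgr : HasGradientAt h ((c / Fo x) • gradient Fo x) x := by
      rw [hasGradientAt_iff_hasFDerivAt, hDeq]
      exact hd2
    exact hgr.gradient
  have hintegrand : ∀ x ∈ A, F (gradient h x) ^ N = |c| ^ N * ((Fo x) ^ N)⁻¹ := by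
    intro x hxA
    have hx := hA0 x hxA
    have hxA' : ρ < Fo x ∧ Fo x < δ := hxA
    have hFox : 0 < Fo x := lt_trans hρ hxA'.1
    rw [hgradh x hxA, hFhom, hFgrad1 x hx, mul_one, abs_div, abs_of_pos hFox, div_pow,
      div_eq_mul_inv]
  -- measure-theoretic part
  set κv := volume {x : Euc N | Fo x ≤ 1} with hκv
  have hT_closed : ∀ t : ℝ, IsClosed {x : Euc N | Fo x ≤ t} := fun t =>
    isClosed_le hFo_cont continuous_const
  have hκv_fin : κv ≠ ⊤ := by
    have hsub2 : {x : Euc N | Fo x ≤ 1} ⊆ Metric.closedBall 0 M := by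
      intro x hx
      simp only [mem_setOf_eq] at hx
      rw [Metric.mem_closedBall, dist_zero_right]
      have h1 := hFo_low x
      rw [div_le_iff₀ hMpos] at h1
      nlinarith
    exact ne_top_of_le_ne_top measure_closedBall_lt_top.ne (measure_mono hsub2)
  have hκ0 : 0 ≤ κ := hκ ▸ ENNReal.toReal_nonneg
  have hκofReal : ENNReal.ofReal κ = κv := by
    rw [hκ]
    exact ENNReal.ofReal_toReal hκv_fin
  have e1 : ∀ u : ℝ, ENNReal.ofReal (κ * u) = ENNReal.ofReal u * κv := by
    intro u
    rw [ENNReal.ofReal_mul hκ0, hκofReal, mul_comm]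
  have hvolT : ∀ t : ℝ, 0 < t →
      volume {x : Euc N | Fo x ≤ t} = ENNReal.ofReal (t ^ N) * κv := by
    intro t ht
    have hset : {x : Euc N | Fo x ≤ t} = t • {x : Euc N | Fo x ≤ 1} := by
      ext x
      rw [mem_smul_set_iff_inv_smul_mem₀ ht.ne']
      simp only [mem_setOf_eq]
      rw [hFo_smul t⁻¹ (inv_pos.2 ht) x]
      constructor
      · intro h1
        nlinarith [mul_inv_cancel₀ ht.ne', hFo_nonneg x, inv_pos.2 ht]
      · intro h1
        nlinarith [mul_inv_cancel₀ ht.ne', hFo_nonneg x, inv_pos.2 ht]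
    rw [hset, Measure.addHaar_smul, finrank_euclideanSpace_fin, abs_of_pos (pow_pos ht N)]
  set dens : ℝ → NNReal := fun r => Real.toNNReal ((N : ℝ) * κ) * Real.toNNReal r ^ (N - 1)
    with hdens
  have hdens_meas : Measurable dens := by
    apply Measurable.mul
    · exact measurable_const
    · exact (measurable_real_toNNReal.comp measurable_id).pow_const _
  have hzeroIoc : ∀ s t : ℝ, t ≤ 0 → ∫⁻ r in Ioc s t, (dens r : ENNReal) = 0 := by
    intro s t ht
    have hcongr : ∀ᵐ r ∂(volume : Measure ℝ), r ∈ Ioc s t → (dens r : ENNReal) = 0 := by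
      refine Filter.Eventually.of_forall ?_
      intro r hr
      have hr0 : r ≤ 0 := le_trans hr.2 ht
      simp [hdens, Real.toNNReal_of_nonpos hr0, zero_pow (show N - 1 ≠ 0 by omega)]
    rw [setLIntegral_congr_fun_ae measurableSet_Ioc hcongr]
    simp
  have hIoc : ∀ s t : ℝ, 0 ≤ s → s ≤ t →
      ∫⁻ r in Ioc s t, (dens r : ENNReal) = ENNReal.ofReal (κ * (t ^ N - s ^ N)) := by
    intro s t hs hst
    have hNκ : (0:ℝ) ≤ (N : ℝ) * κ := mul_nonneg (Nat.cast_nonneg N) hκ0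
    have hcongr : ∀ᵐ r ∂(volume : Measure ℝ), r ∈ Ioc s t →
        (dens r : ENNReal) = ENNReal.ofReal ((N : ℝ) * κ * r ^ (N - 1)) := by
      refine Filter.Eventually.of_forall ?_
      intro r hr
      have hr0 : (0:ℝ) ≤ r := le_of_lt (lt_of_le_of_lt hs hr.1)
      rw [hdens]
      rw [ENNReal.ofReal_mul hNκ, ENNReal.ofReal_pow hr0]
      rw [ENNReal.coe_mul, ENNReal.coe_pow]
      rfl
    rw [setLIntegral_congr_fun_ae measurableSet_Ioc hcongr]
    have hint : IntegrableOn (fun r : ℝ => (N : ℝ) * κ * r ^ (N - 1)) (Ioc s t) volume := by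
      apply Continuous.integrableOn_Ioc
      exact continuous_const.mul (continuous_pow _)
    have hnn : 0 ≤ᵐ[volume.restrict (Ioc s t)] fun r : ℝ => (N : ℝ) * κ * r ^ (N - 1) := by
      refine (ae_restrict_iff' measurableSet_Ioc).mpr (Filter.Eventually.of_forall ?_)
      intro r hr
      have hr0 : (0:ℝ) ≤ r := le_of_lt (lt_of_le_of_lt hs hr.1)
      have hnn0 : (0:ℝ) ≤ (N : ℝ) * κ * r ^ (N - 1) := by positivity
      simpa using hnn0
    rw [← ofReal_integral_eq_lintegral_ofReal hint hnn]
    congr 1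
    rw [← intervalIntegral.integral_of_le hst, intervalIntegral.integral_const_mul,
      integral_pow, Nat.sub_add_cancel hN1]
    have hcast : ((N - 1 : ℕ) : ℝ) + 1 = (N : ℝ) := by
      push_cast [Nat.cast_sub hN1]
      ring
    rw [hcast]
    have hNne : (N : ℝ) ≠ 0 := Nat.cast_ne_zero.mpr (by omega)
    field_simp
  have hν : Measure.map Fo volume = volume.withDensity (fun r => (dens r : ENNReal)) := by
    refine Measure.ext_of_Ioc' _ _ (fun s t hst => ?_) (fun s t hst => ?_)
    · rw [Measure.map_apply hFo_cont.measurable measurableSet_Ioc]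
      rcases le_or_gt t 0 with ht | ht
      · have hsub3 : Fo ⁻¹' Ioc s t ⊆ {(0 : Euc N)} := by
          intro x hx
          simp only [mem_preimage, mem_Ioc] at hx
          simp only [mem_singleton_iff]
          by_contra h0
          exact absurd (le_trans hx.2 ht) (not_le.mpr (hFo_pos x h0))
        rw [measure_mono_null hsub3 (measure_singleton 0)]
        exact ENNReal.zero_ne_top
      · have hsub3 : Fo ⁻¹' Ioc s t ⊆ {x : Euc N | Fo x ≤ t} := fun x hx => hx.2
        refine ne_top_of_le_ne_top ?_ (measure_mono hsub3)
        rw [hvolT t ht]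
        exact ENNReal.mul_ne_top ENNReal.ofReal_ne_top hκv_fin
    · rw [Measure.map_apply hFo_cont.measurable measurableSet_Ioc,
        withDensity_apply _ measurableSet_Ioc]
      rcases le_or_gt t 0 with ht | ht
      · have hsub3 : Fo ⁻¹' Ioc s t ⊆ {(0 : Euc N)} := by
          intro x hx
          simp only [mem_preimage, mem_Ioc] at hx
          simp only [mem_singleton_iff]
          by_contra h0
          exact absurd (le_trans hx.2 ht) (not_le.mpr (hFo_pos x h0))
        rw [measure_mono_null hsub3 (measure_singleton 0), hzeroIoc s t ht]
      · have hpreIoc : Fo ⁻¹' (Ioc s t) = {x : Euc N | Fo x ≤ t} \ {x : Euc N | Fo x ≤ s} := by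
          ext x
          simp only [mem_preimage, mem_Ioc, mem_diff, mem_setOf_eq, not_le]
          tauto
        rw [hpreIoc]
        rcases le_or_gt s 0 with hs0 | hs0
        · have hvs : volume {x : Euc N | Fo x ≤ s} = 0 := by
            have hsub4 : {x : Euc N | Fo x ≤ s} ⊆ {(0 : Euc N)} := by
              intro x hx
              simp only [mem_setOf_eq] at hx
              simp only [mem_singleton_iff]
              by_contra h0
              exact absurd (le_trans hx hs0) (not_le.mpr (hFo_pos x h0))
            exact measure_mono_null hsub4 (measure_singleton 0)
          rw [measure_diff (show {x : Euc N | Fo x ≤ s} ⊆ {x : Euc N | Fo x ≤ t} from fun x hx => le_trans hx hst.le)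
            ((hT_closed s).measurableSet.nullMeasurableSet) (by rw [hvs]; exact ENNReal.zero_ne_top),
            hvs, tsub_zero, hvolT t ht]
          rw [← Ioc_union_Ioc_eq_Ioc hs0 ht.le,
            lintegral_union measurableSet_Ioc (Ioc_disjoint_Ioc_of_le le_rfl),
            hzeroIoc s 0 le_rfl, zero_add, hIoc 0 t le_rfl ht.le,
            zero_pow (show N ≠ 0 by omega), sub_zero, e1]
        · rw [measure_diff (show {x : Euc N | Fo x ≤ s} ⊆ {x : Euc N | Fo x ≤ t} from fun x hx => le_trans hx hst.le)
            ((hT_closed s).measurableSet.nullMeasurableSet)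
            (by rw [hvolT s hs0]; exact ENNReal.mul_ne_top ENNReal.ofReal_ne_top hκv_fin),
            hvolT t ht, hvolT s hs0, hIoc s t hs0.le hst.le]
          rw [show κ * (t ^ N - s ^ N) = κ * t ^ N - κ * s ^ N by ring,
            ENNReal.ofReal_sub _ (mul_nonneg hκ0 (by positivity)), e1, e1]
  -- the main integral computation
  have hAmeas : MeasurableSet A := by
    have : A = Fo ⁻¹' (Ioo ρ δ) := by
      ext x
      simp [hAdef, mem_Ioo]
    rw [this]
    exact hFo_cont.measurable measurableSet_Ioo
  have hpre : Fo ⁻¹' (Ioo ρ δ) = A := by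
    ext x
    simp [hAdef, mem_Ioo]
  have hI : ∫ x in A, ((Fo x) ^ N)⁻¹ = (N : ℝ) * κ * Real.log (δ / ρ) := by
    have estep : ∫ x in A, ((Fo x) ^ N)⁻¹
        = ∫ r in Ioo ρ δ, ((r : ℝ) ^ N)⁻¹ ∂(Measure.map Fo volume) := by
      have hgm : AEStronglyMeasurable (fun r : ℝ => ((r : ℝ) ^ N)⁻¹) (Measure.map Fo volume) :=
        (Measurable.inv (measurable_id.pow_const N) :
          Measurable fun r : ℝ => ((r : ℝ) ^ N)⁻¹).aestronglyMeasurable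
      rw [setIntegral_map measurableSet_Ioo hgm hFo_cont.aemeasurable, hpre]
    have e2 : ∀ r ∈ Ioo ρ δ, dens r • ((r : ℝ) ^ N)⁻¹ = ((N : ℝ) * κ) * r⁻¹ := by
      intro r hr
      have hr0 : 0 < r := lt_trans hρ hr.1
      have hNκ : (0:ℝ) ≤ (N : ℝ) * κ := mul_nonneg (Nat.cast_nonneg N) hκ0
      rw [NNReal.smul_def]
      have hd : ((dens r : NNReal) : ℝ) = (N : ℝ) * κ * r ^ (N - 1) := by
        rw [hdens]
        push_cast
        rw [Real.coe_toNNReal _ hNκ, Real.coe_toNNReal _ hr0.le]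
      rw [hd]
      have hrN : (r : ℝ) ^ N = r ^ (N - 1) * r := by
        rw [← pow_succ, Nat.sub_add_cancel hN1]
      rw [hrN]
      have hrpow : (r : ℝ) ^ (N - 1) ≠ 0 := pow_ne_zero _ hr0.ne'
      field_simp
      simp only [smul_eq_mul]
      field_simp
    rw [estep, hν, setIntegral_withDensity_eq_setIntegral_smul hdens_meas _ measurableSet_Ioo,
      setIntegral_congr_fun measurableSet_Ioo e2, integral_const_mul,
      ← integral_Ioc_eq_integral_Ioo, ← intervalIntegral.integral_of_le hρδ.le,
      integral_inv_of_pos hρ hδ]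
  have hstep1 : ∫ x in A, F (gradient h x) ^ N = |c| ^ N * ∫ x in A, ((Fo x) ^ N)⁻¹ := by
    rw [setIntegral_congr_fun hAmeas (fun x hx => hintegrand x hx)]
    exact integral_const_mul _ _
  have hlogdr : Real.log (δ / ρ) = L := by
    rw [Real.log_div hδ.ne' hρ.ne', hLdef]
  have hcabs : |c| = |b - a| / L := by
    rw [hcdef, abs_div, abs_of_pos hL, abs_sub_comm]
  have hLN : L ^ N = L ^ (N - 1) * L := by
    rw [← pow_succ, Nat.sub_add_cancel hN1]
  rw [hstep1, hI, hlogdr, hcabs, div_pow, hLN]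
  have hLne : L ≠ 0 := hL.ne'
  have hLpowne : L ^ (N - 1) ≠ 0 := pow_ne_zero _ hLne
  field_simp

end
end
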